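/- Let Z be compact Hausdorff, h : Z → Z a surjective local homeomorphism, and β_c as above. For β > β_c, the series ∑_{n=0}^∞ e^{-βn} |h^{-n}(z)| converges uniformly in z ∈ Z to a continuous function f_β : Z → ℝ. -/

import Mathlib

open Filter

/-- The critical inverse temperature `β_c = limsup n⁻¹ ln (max_z |h⁻ⁿ(z)|)`. -/
noncomputable def betaC {Z : Type*} (h : Z → Z) : ℝ :=
  Filter.limsup
    (fun n : ℕ => (n : ℝ)⁻¹ *
      Real.log (⨆ z : Z, (Nat.card ((h^[n]) ⁻¹' {z}) : ℝ))) Filter.atTop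

open Set
section aux
variable {Z : Type*} [TopologicalSpace Z] [CompactSpace Z] [T2Space Z]

lemma fiber_finite {g : Z → Z} (hg : IsLocalHomeomorph g) (z : Z) :
    (g ⁻¹' {z}).Finite := by
  classical
  have hc : IsCompact (g ⁻¹' {z}) :=
    (IsClosed.preimage hg.continuous isClosed_singleton).isCompact
  choose e hmem heq using hg
  obtain ⟨b', hb'sub, hb'fin, hcov⟩ := hc.elim_finite_subcover_image
    (fun x _ => (e x).open_source)
    (fun x hx => mem_biUnion hx (hmem x))
  refine hb'fin.subset ?_
  intro y hy
  obtain ⟨x, hx, hyx⟩ := mem_iUnion₂.mp (hcov hy)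
  have hxz : x ∈ g ⁻¹' {z} := hb'sub hx
  have : y = x := by
    apply (e x).injOn hyx (hmem x)
    rw [← heq x]
    exact hy.trans hxz.symm
  exact this ▸ hx

lemma fiber_card_locally_const {g : Z → Z} (hg : IsLocalHomeomorph g) (z₀ : Z) :
    ∀ᶠ z in nhds z₀, Nat.card ((g ⁻¹' {z}) : Set Z) = Nat.card ((g ⁻¹' {z₀}) : Set Z) := by
  classical
  have hfin := fiber_finite hg z₀
  have hgo : IsOpenMap g := hg.isOpenMap
  have hgc : Continuous g := hg.continuous
  choose e hmem heq using hg
  obtain ⟨U, hU, hdisj⟩ := hfin.t2_separation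
  set V : Z → Set Z := fun x => U x ∩ (e x).source with hV
  have hVopen : ∀ x, IsOpen (V x) := fun x => (hU x).2.inter (e x).open_source
  have hxV : ∀ x, x ∈ V x := fun x => ⟨(hU x).1, hmem x⟩
  have hinj : ∀ x, Set.InjOn g (V x) := fun x =>
    (heq x ▸ (e x).injOn.mono inter_subset_right)
  set W : Set Z := (⋂ x ∈ g ⁻¹' {z₀}, g '' V x) ∩ (g '' (⋃ x ∈ g ⁻¹' {z₀}, V x)ᶜ)ᶜ with hW
  have hWopen : IsOpen W := by
    apply IsOpen.inter
    · exact hfin.isOpen_biInter fun x _ => hgo _ (hVopen x)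
    · have hcl : IsClosed (⋃ x ∈ g ⁻¹' {z₀}, V x)ᶜ :=
        (isOpen_biUnion fun x _ => hVopen x).isClosed_compl
      exact (hgc.isClosedMap _ hcl).isOpen_compl
  have hz₀W : z₀ ∈ W := by
    constructor
    · exact mem_iInter₂.mpr fun x hx => ⟨x, hxV x, hx⟩
    · rintro ⟨y, hy, hgy⟩
      exact hy (mem_biUnion (show y ∈ g ⁻¹' {z₀} from hgy) (hxV y))
  filter_upwards [hWopen.mem_nhds hz₀W] with z hz
  have hchoice : ∀ x ∈ g ⁻¹' {z₀}, ∃ y, y ∈ V x ∧ g y = z := by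
    intro x hx
    obtain ⟨y, hy, hgy⟩ := mem_iInter₂.mp hz.1 x hx
    exact ⟨y, hy, hgy⟩
  choose! φ hφV hφg using hchoice
  have himg : g ⁻¹' {z} = φ '' (g ⁻¹' {z₀}) := by
    ext y
    constructor
    · intro hy
      have hyU : y ∈ ⋃ x ∈ g ⁻¹' {z₀}, V x := by
        by_contra hyU
        exact hz.2 ⟨y, hyU, hy⟩
      obtain ⟨x, hx, hyV⟩ := mem_iUnion₂.mp hyU
      exact ⟨x, hx, hinj x (hφV x hx) hyV (by rw [hφg x hx]; exact hy.symm)⟩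
    · rintro ⟨x, hx, rfl⟩
      exact hφg x hx
  have hinjφ : Set.InjOn φ (g ⁻¹' {z₀}) := by
    intro a ha b hb hab
    by_contra hne
    exact Set.disjoint_left.mp (hdisj ha hb hne) (hφV a ha).1 (hab ▸ (hφV b hb).1)
  rw [Nat.card_coe_set_eq, Nat.card_coe_set_eq, himg,
    Set.ncard_image_of_injOn hinjφ]

lemma fiber_card_continuous {g : Z → Z} (hg : IsLocalHomeomorph g) :
    Continuous (fun z => (Nat.card ((g ⁻¹' {z}) : Set Z) : ℝ)) := by
  rw [continuous_iff_continuousAt]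
  intro z₀
  have h1 : (fun z => (Nat.card ((g ⁻¹' {z}) : Set Z) : ℝ)) =ᶠ[nhds z₀]
      (fun _ => (Nat.card ((g ⁻¹' {z₀}) : Set Z) : ℝ)) :=
    (fiber_card_locally_const hg z₀).mono fun z hz => by simp only [hz]
  exact h1.continuousAt

lemma iterate_isLocalHomeomorph {g : Z → Z} (hg : IsLocalHomeomorph g) (n : ℕ) :
    IsLocalHomeomorph (g^[n]) := by
  induction n with
  | zero =>
    simpa [Function.iterate_zero] using (Homeomorph.refl Z).isLocalHomeomorph
  | succ n ih =>
    rw [Function.iterate_succ]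
    exact ih.comp hg

end aux

section aux2
variable {Z : Type*} [TopologicalSpace Z] [CompactSpace Z] [T2Space Z]

lemma card_iterate_succ_le {h : Z → Z} (hl : IsLocalHomeomorph h) (n : ℕ) (z : Z)
    {M : ℝ} (hM : ∀ w, (Nat.card (((h^[n]) ⁻¹' {w}) : Set Z) : ℝ) ≤ M) (hM0 : 0 ≤ M) :
    (Nat.card (((h^[n+1]) ⁻¹' {z}) : Set Z) : ℝ) ≤
      (Nat.card (((h^[1]) ⁻¹' {z}) : Set Z) : ℝ) * M := by
  classical
  have hit := iterate_isLocalHomeomorph hl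
  have hF : (h^[1] ⁻¹' {z}).Finite := fiber_finite (hit 1) z
  have hS : (h^[n+1] ⁻¹' {z}).Finite := fiber_finite (hit (n+1)) z
  have hA : ∀ w, ((h^[n]) ⁻¹' {w}).Finite := fun w => fiber_finite (hit n) w
  have hsub : hS.toFinset ⊆ hF.toFinset.biUnion (fun w => (hA w).toFinset) := by
    intro y hy
    rw [Set.Finite.mem_toFinset] at hy
    have hy' : h^[1] (h^[n] y) = z := by
      simpa [Function.iterate_one, ← Function.iterate_succ_apply' h n y] using hy
    refine Finset.mem_biUnion.mpr ⟨h^[n] y, ?_, ?_⟩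
    · rw [Set.Finite.mem_toFinset]; exact hy'
    · rw [Set.Finite.mem_toFinset]; rfl
  have hcard : (Nat.card (((h^[n+1]) ⁻¹' {z}) : Set Z)) ≤
      ∑ w ∈ hF.toFinset, Nat.card (((h^[n]) ⁻¹' {w}) : Set Z) := by
    rw [Nat.card_coe_set_eq, Set.ncard_eq_toFinset_card _ hS]
    refine (Finset.card_le_card hsub).trans (Finset.card_biUnion_le.trans ?_)
    refine Finset.sum_le_sum fun w _ => ?_
    rw [Nat.card_coe_set_eq, Set.ncard_eq_toFinset_card _ (hA w)]
  calc (Nat.card (((h^[n+1]) ⁻¹' {z}) : Set Z) : ℝ)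
      ≤ ∑ w ∈ hF.toFinset, (Nat.card (((h^[n]) ⁻¹' {w}) : Set Z) : ℝ) := by
        exact_mod_cast hcard
    _ ≤ ∑ _w ∈ hF.toFinset, M := Finset.sum_le_sum fun w _ => hM w
    _ = (hF.toFinset.card : ℝ) * M := by rw [Finset.sum_const, nsmul_eq_mul]
    _ = (Nat.card (((h^[1]) ⁻¹' {z}) : Set Z) : ℝ) * M := by
        rw [Nat.card_coe_set_eq, Set.ncard_eq_toFinset_card _ hF]

end aux2

/-- For `β > β_c`, the series `∑ₙ e^{-βn} |h^{-n}(z)|` converges uniformly in `z`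
to a continuous function `f_β`. -/
theorem stmt2 {Z : Type*} [TopologicalSpace Z] [CompactSpace Z] [T2Space Z] [Nonempty Z]
    (h : Z → Z) (hloc : IsLocalHomeomorph h) (hsurj : Function.Surjective h)
    {β : ℝ} (hβ : betaC h < β) :
    ∃ fβ : C(Z, ℝ),
      TendstoUniformly
        (fun (N : ℕ) (z : Z) =>
          ∑ n ∈ Finset.range N, Real.exp (-β * n) * (Nat.card ((h^[n]) ⁻¹' {z}) : ℝ))
        (⇑fβ) Filter.atTop := by
  classical
  have hit : ∀ n, IsLocalHomeomorph (h^[n]) := iterate_isLocalHomeomorph hloc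
  set c : ℕ → Z → ℝ := fun n z => (Nat.card ((h^[n]) ⁻¹' {z}) : ℝ) with hcdef
  have hcont : ∀ n, Continuous (c n) := fun n => fiber_card_continuous (hit n)
  have hone : ∀ n z, 1 ≤ c n z := by
    intro n z
    obtain ⟨y, hy⟩ := (hsurj.iterate n) z
    have hfin := fiber_finite (hit n) z
    haveI := hfin.to_subtype
    haveI : Nonempty (((h^[n]) ⁻¹' {z}) : Set Z) := ⟨⟨y, hy⟩⟩
    have hpos : 0 < Nat.card (((h^[n]) ⁻¹' {z}) : Set Z) := Nat.card_pos
    show (1:ℝ) ≤ (Nat.card ((h^[n]) ⁻¹' {z}) : ℝ)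
    exact_mod_cast hpos
  set M : ℕ → ℝ := fun n => ⨆ z, c n z with hMdef
  have hbdd : ∀ n, BddAbove (Set.range (c n)) := fun n => (isCompact_range (hcont n)).bddAbove
  have hle : ∀ n z, c n z ≤ M n := fun n z => le_ciSup (hbdd n) z
  have hM1 : ∀ n, 1 ≤ M n := fun n => (hone n (Classical.arbitrary Z)).trans (hle n _)
  have hM0 : ∀ n, (0:ℝ) ≤ M n := fun n => zero_le_one.trans (hM1 n)
  have hMrec : ∀ n, M (n+1) ≤ M 1 * M n := by
    intro n
    refine ciSup_le fun z => ?_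
    calc c (n+1) z ≤ c 1 z * M n :=
          card_iterate_succ_le hloc n z (fun w => hle n w) (hM0 n)
      _ ≤ M 1 * M n := mul_le_mul_of_nonneg_right (hle 1 z) (hM0 n)
  have hpow : ∀ n, M n ≤ (M 1) ^ n := by
    intro n
    induction n with
    | zero =>
      have hc0 : ∀ z, c 0 z = 1 := by
        intro z
        simp [hcdef, Nat.card_coe_set_eq]
      have : M 0 = 1 := by
        rw [hMdef]; simp only [hc0]; exact ciSup_const
      simp [this]
    | succ n ih =>
      calc M (n+1) ≤ M 1 * M n := hMrec n
        _ ≤ M 1 * (M 1) ^ n := mul_le_mul_of_nonneg_left ih (hM0 1)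
        _ = (M 1) ^ (n+1) := (pow_succ' _ _).symm
  have hub : ∀ n : ℕ, (n:ℝ)⁻¹ * Real.log (M n) ≤ Real.log (M 1) := by
    intro n
    rcases Nat.eq_zero_or_pos n with hn | hn
    · subst hn
      simp only [Nat.cast_zero, inv_zero, zero_mul]
      exact Real.log_nonneg (hM1 1)
    · have hn0 : (0:ℝ) < n := by exact_mod_cast hn
      have hlog : Real.log (M n) ≤ n * Real.log (M 1) := by
        calc Real.log (M n) ≤ Real.log ((M 1) ^ n) :=
            Real.log_le_log (lt_of_lt_of_le one_pos (hM1 n)) (hpow n)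
          _ = n * Real.log (M 1) := by rw [Real.log_pow]
      calc (n:ℝ)⁻¹ * Real.log (M n) ≤ (n:ℝ)⁻¹ * (n * Real.log (M 1)) :=
            mul_le_mul_of_nonneg_left hlog (by positivity)
        _ = Real.log (M 1) := by field_simp
  have hbound : Filter.IsBoundedUnder (· ≤ ·) Filter.atTop
      (fun n : ℕ => (n:ℝ)⁻¹ * Real.log (M n)) :=
    ⟨Real.log (M 1), Filter.eventually_map.mpr (Filter.Eventually.of_forall hub)⟩
  set β' : ℝ := (betaC h + β) / 2 with hβ'def
  have hβ'2 : β' < β := by rw [hβ'def]; linarith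
  have hlim : Filter.limsup (fun n : ℕ => (n:ℝ)⁻¹ * Real.log (M n)) Filter.atTop < β' := by
    simp only [hMdef, hcdef]
    show betaC h < β'
    rw [hβ'def]; linarith
  have hev : ∀ᶠ n : ℕ in Filter.atTop, (n:ℝ)⁻¹ * Real.log (M n) < β' :=
    Filter.eventually_lt_of_limsup_lt hlim hbound
  have hMev : ∀ᶠ n : ℕ in Filter.atTop, M n ≤ Real.exp (β' * n) := by
    filter_upwards [hev, Filter.eventually_ge_atTop 1] with n hn hn1
    have hn0 : (0:ℝ) < n := by exact_mod_cast hn1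
    have h2 : (n:ℝ) * ((n:ℝ)⁻¹ * Real.log (M n)) < n * β' :=
      mul_lt_mul_of_pos_left hn hn0
    rw [← mul_assoc, mul_inv_cancel₀ hn0.ne', one_mul] at h2
    have h3 : M n < Real.exp (n * β') :=
      (Real.log_lt_iff_lt_exp (lt_of_lt_of_le one_pos (hM1 n))).mp h2
    rw [mul_comm] at h3
    exact h3.le
  set u : ℕ → ℝ := fun n => Real.exp (-β * n) * M n with hudef
  have hsum : Summable u := by
    obtain ⟨k, hk⟩ := Filter.eventually_atTop.mp hMev
    have hr : Real.exp (β' - β) < 1 := Real.exp_lt_one_iff.mpr (by linarith)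
    have hr0 : (0:ℝ) ≤ Real.exp (β' - β) := (Real.exp_pos _).le
    have hgeo : Summable (fun n : ℕ => Real.exp (β' - β) ^ (n + k)) := by
      simpa [pow_add] using
        (summable_geometric_of_lt_one hr0 hr).mul_right (Real.exp (β' - β) ^ k)
    have h1 : Summable (fun n : ℕ => u (n + k)) := by
      refine Summable.of_nonneg_of_le
        (fun n => mul_nonneg (Real.exp_nonneg _) (hM0 (n+k))) (fun n => ?_) hgeo
      have hkn := hk (n + k) (le_add_self)
      set m : ℕ := n + k with hm
      calc u m ≤ Real.exp (-β * (m:ℝ)) * Real.exp (β' * (m:ℝ)) :=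
            mul_le_mul_of_nonneg_left hkn (Real.exp_nonneg _)
        _ = Real.exp ((m:ℝ) * (β' - β)) := by
            rw [← Real.exp_add]; ring_nf
        _ = Real.exp (β' - β) ^ m := Real.exp_nat_mul _ m
    exact (summable_nat_add_iff k).mp h1
  have hfu : ∀ (n : ℕ) (x : Z), ‖Real.exp (-β * n) * c n x‖ ≤ u n := by
    intro n x
    rw [Real.norm_eq_abs,
      abs_of_nonneg (mul_nonneg (Real.exp_nonneg _) (zero_le_one.trans (hone n x)))]
    exact mul_le_mul_of_nonneg_left (hle n x) (Real.exp_nonneg _)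
  have huni := tendstoUniformly_tsum_nat hsum hfu
  refine ⟨⟨fun z => ∑' (n : ℕ), Real.exp (-β * (n:ℝ)) * c n z, ?_⟩, huni⟩
  exact huni.continuous (Filter.Frequently.of_forall fun N =>
    continuous_finset_sum _ fun n _ => continuous_const.mul (hcont n))
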